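/- Let q = ef + 1 ≡ 1 (mod 4) be a prime power with f = 2 and e = (q−1)/2 even, and let C₀²′ = {C₀^e, C₂^e, …, C_{e−2}^e} be the family of cyclotomic classes of order e partitioning the set C₀² of nonzero squares. Then: (i) when q ≡ 1 (mod 8), C₀²′ is a (q, (q−1)/4, 2, 1, 0)-disjoint partial difference family and a (q, (q−1)/4, 2, (q−9)/4, (q−1)/4)-external partial difference family; (ii) when q ≡ 5 (mod 8), C₀²′ is a (q, (q−1)/4, 2, 0, 1)-disjoint partial difference family and a (q, (q−1)/4, 2, (q−5)/4)-external difference family. -/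

import Mathlib

open Finset

section Defs

variable {G : Type*} [AddGroup G] [DecidableEq G]

/-- The multiset of internal differences `x - y` (`x ≠ y`) of a finset. -/
def intDiff (D : Finset G) : Multiset G :=
  ((D ×ˢ D).filter fun p => p.1 ≠ p.2).val.map fun p => p.1 - p.2

/-- The multiset of external differences `x - y`, `x ∈ D₁`, `y ∈ D₂`. -/
def extDiff (D₁ D₂ : Finset G) : Multiset G :=
  (D₁ ×ˢ D₂).val.map fun p => p.1 - p.2

variable {ι : Type*} [Fintype ι] [DecidableEq ι]

/-- The multiset of all internal differences of a family of sets. -/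
def famInt (D : ι → Finset G) : Multiset G := ∑ i, intDiff (D i)

/-- The multiset of all external differences between distinct members of a family of sets. -/
def famExt (D : ι → Finset G) : Multiset G :=
  ∑ i, ∑ j, if j = i then 0 else extDiff (D i) (D j)

/-- The union of the members of a family of sets. -/
def famU (D : ι → Finset G) : Finset G := Finset.univ.biUnion D

variable [Fintype G]

/-- `D` is an `(n,k,λ)`-difference set: `Δ(D) = λ(G*)`. -/
def IsDS (n k : ℕ) (lam : ℤ) (D : Finset G) : Prop :=
  Fintype.card G = n ∧ D.card = k ∧
    ∀ x : G, ((intDiff D).count x : ℤ) = if x = 0 then 0 else lam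

/-- `P` is an `(n,k,λ,μ)`-partial difference set: `Δ(P) = λ(P) + μ(G* \ P)`. -/
def IsPDS (n k : ℕ) (lam mu : ℤ) (P : Finset G) : Prop :=
  Fintype.card G = n ∧ P.card = k ∧
    ∀ x : G, ((intDiff P).count x : ℤ) =
      if x ∈ P then lam else if x = 0 then 0 else mu

/-- `D` is a family of `m` pairwise disjoint `k`-subsets of a group of order `n`. -/
def FamShape (n m k : ℕ) (D : ι → Finset G) : Prop :=
  Fintype.card G = n ∧ Fintype.card ι = m ∧ (∀ i, (D i).card = k) ∧
    ∀ i j, i ≠ j → Disjoint (D i) (D j)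

/-- `(n,m,k,λ)`-disjoint difference family: `⋃ᵢ Δ(Dᵢ) = λ(G*)`. -/
def IsDDF (n m k : ℕ) (lam : ℤ) (D : ι → Finset G) : Prop :=
  FamShape n m k D ∧
    ∀ x : G, ((famInt D).count x : ℤ) = if x = 0 then 0 else lam

/-- `(n,m,k,λ)`-external difference family: `⋃_{i≠j} Δ(Dᵢ,Dⱼ) = λ(G*)`. -/
def IsEDF (n m k : ℕ) (lam : ℤ) (D : ι → Finset G) : Prop :=
  FamShape n m k D ∧
    ∀ x : G, ((famExt D).count x : ℤ) = if x = 0 then 0 else lam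

/-- `(n,m,k,λ,μ)`-disjoint partial difference family:
sets in `G*`, `⋃ᵢ Δ(Dᵢ) = λ(S) + μ(G* \ S)` where `S = ⋃ᵢ Dᵢ`. -/
def IsDPDF (n m k : ℕ) (lam mu : ℤ) (D : ι → Finset G) : Prop :=
  FamShape n m k D ∧ (∀ i, (0 : G) ∉ D i) ∧
    ∀ x : G, ((famInt D).count x : ℤ) =
      if x ∈ famU D then lam else if x = 0 then 0 else mu

/-- `(n,m,k,λ,μ)`-external partial difference family:
sets in `G*`, `⋃_{i≠j} Δ(Dᵢ,Dⱼ) = λ(S) + μ(G* \ S)` where `S = ⋃ᵢ Dᵢ`. -/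
def IsEPDF (n m k : ℕ) (lam mu : ℤ) (D : ι → Finset G) : Prop :=
  FamShape n m k D ∧ (∀ i, (0 : G) ∉ D i) ∧
    ∀ x : G, ((famExt D).count x : ℤ) =
      if x ∈ famU D then lam else if x = 0 then 0 else mu

end Defs

section FieldDefs

variable {F : Type*} [Field F] [DecidableEq F]

/-- `α` is a primitive element: every nonzero element is a power of `α`. -/
def IsPrimitiveElt (α : F) : Prop := ∀ x : F, x ≠ 0 → ∃ k : ℕ, x = α ^ k

/-- The coset `α^i⟨α^e⟩` of the cyclotomic class of order `e` (of size `f`). -/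
def cyclo (α : F) (e f i : ℕ) : Finset F :=
  (Finset.range f).image fun j => α ^ (i + e * j)

/-- The cyclotomic number `(i,j)_e`: the number of pairs `(zᵢ, zⱼ) ∈ Cᵢ × Cⱼ` with `zᵢ + 1 = zⱼ`. -/
def cycNum (α : F) (e f i j : ℕ) : ℕ :=
  ((cyclo α e f i ×ˢ cyclo α e f j).filter fun p => p.1 + 1 = p.2).card

/-- `Φᵢ = {x ∈ C₀^e : x ≠ 1, x - 1 ∈ α^i C₀^ε}`. -/
def Phi (α : F) (e f ε ρ i : ℕ) : Finset F :=
  (cyclo α e f 0).filter fun x => x ≠ 1 ∧ x - 1 ∈ cyclo α ε ρ i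

/-- `φᵢ = |Φᵢ|`. -/
def phi (α : F) (e f ε ρ i : ℕ) : ℕ := (Phi α e f ε ρ i).card

end FieldDefs


section Aux
set_option linter.unusedSectionVars false
open Finset
variable {G : Type*} [AddGroup G] [DecidableEq G]
variable {ι : Type*} [Fintype ι] [DecidableEq ι]

lemma count_intDiff (D : Finset G) (x : G) :
    (intDiff D).count x = ((D ×ˢ D).filter fun p => p.1 ≠ p.2 ∧ x = p.1 - p.2).card := by
  rw [intDiff, Multiset.count_map, ← Finset.filter_val, Finset.filter_filter]
  rfl

lemma count_extDiff (D₁ D₂ : Finset G) (x : G) :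
    (extDiff D₁ D₂).count x = ((D₁ ×ˢ D₂).filter fun p => x = p.1 - p.2).card := by
  rw [extDiff, Multiset.count_map, ← Finset.filter_val]
  rfl

lemma count_decomp [Nonempty ι] (D : ι → Finset G) (hdisj : ∀ i j, i ≠ j → Disjoint (D i) (D j)) (x : G) :
    (intDiff (famU D)).count x = (famInt D).count x + (famExt D).count x := by
  classical
  set idx : G → ι := fun a => if h : ∃ i, a ∈ D i then h.choose else Classical.arbitrary ι with hidx
  have hidxp : ∀ (a : G) (i : ι), a ∈ D i → idx a = i := by
    intro a i hai
    have h : ∃ i, a ∈ D i := ⟨i, hai⟩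
    simp only [hidx, dif_pos h]
    by_contra hne
    exact Finset.disjoint_left.mp (hdisj _ _ hne) h.choose_spec hai
  have key : ∀ i j : ι, (((famU D ×ˢ famU D).filter fun p => p.1 ≠ p.2 ∧ x = p.1 - p.2).filter
      fun p => (idx p.1, idx p.2) = (i, j))
      = (D i ×ˢ D j).filter fun p => p.1 ≠ p.2 ∧ x = p.1 - p.2 := by
    intro i j
    ext p
    simp only [mem_filter, mem_product, famU, mem_biUnion, mem_univ, true_and, Prod.mk.injEq]
    constructor
    · rintro ⟨⟨⟨⟨i', hi'⟩, ⟨j', hj'⟩⟩, hp⟩, hi, hj⟩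
      have e1 : i' = i := (hidxp _ _ hi').symm.trans hi
      have e2 : j' = j := (hidxp _ _ hj').symm.trans hj
      exact ⟨⟨e1 ▸ hi', e2 ▸ hj'⟩, hp⟩
    · rintro ⟨⟨h1, h2⟩, hp⟩
      exact ⟨⟨⟨⟨i, h1⟩, ⟨j, h2⟩⟩, hp⟩, hidxp _ _ h1, hidxp _ _ h2⟩
  rw [count_intDiff]
  rw [Finset.card_eq_sum_card_fiberwise (f := fun p => (idx p.1, idx p.2)) (t := Finset.univ)
    (fun p _ => mem_univ _)]
  rw [Fintype.sum_prod_type]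
  have hsplit : ∀ i : ι, ∑ j : ι, (((famU D ×ˢ famU D).filter fun p => p.1 ≠ p.2 ∧ x = p.1 - p.2).filter
      fun p => (idx p.1, idx p.2) = (i, j)).card
      = (intDiff (D i)).count x + ∑ j : ι, (if j = i then 0 else extDiff (D i) (D j)).count x := by
    intro i
    rw [Finset.sum_eq_add_sum_sdiff_singleton_of_mem (mem_univ i)]
    congr 1
    · rw [key i i, count_intDiff]
    · rw [Finset.sum_eq_sum_sdiff_singleton_add (mem_univ i) (f := fun j => (if j = i then 0 else extDiff (D i) (D j)).count x)]
      simp only [if_pos rfl, Multiset.count_zero, add_zero]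
      apply Finset.sum_congr rfl
      intro j hj
      have hji : j ≠ i := by simpa using (Finset.mem_sdiff.mp hj).2
      rw [key i j, if_neg hji, count_extDiff]
      congr 1
      apply Finset.filter_congr
      intro p hp
      have := Finset.mem_product.mp hp
      have hne : p.1 ≠ p.2 := fun h => Finset.disjoint_left.mp (hdisj i j hji.symm) this.1 (h ▸ this.2)
      simp [hne]
  rw [Finset.sum_congr rfl fun i _ => hsplit i, Finset.sum_add_distrib]
  congr 1
  · rw [famInt, Multiset.count_sum']
  · rw [famExt, Multiset.count_sum']
    exact Finset.sum_congr rfl fun i _ => (Multiset.count_sum').symm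

lemma count_intDiff_pair {a b x : G} (h : a ≠ b) :
    (intDiff ({a, b} : Finset G)).count x
      = (if x = a - b then 1 else 0) + (if x = b - a then 1 else 0) := by
  have hfil : ((({a, b} : Finset G) ×ˢ {a, b}).filter fun p => p.1 ≠ p.2)
      = {(a, b), (b, a)} := by
    ext ⟨p1, p2⟩
    simp only [mem_filter, mem_product, mem_insert, mem_singleton, Prod.mk.injEq]
    constructor
    · rintro ⟨⟨h1 | h1, h2 | h2⟩, hne⟩ <;> subst h1 <;> subst h2 <;> simp_all
    · rintro (⟨h1, h2⟩ | ⟨h1, h2⟩) <;> subst h1 <;> subst h2 <;>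
        simp [h, h.symm]
  have hmem : ((a, b) : G × G) ∉ ({(b, a)} : Finset (G × G)) := by
    simp only [mem_singleton, Prod.mk.injEq, not_and]
    intro h1; exact absurd h1 h
  rw [intDiff, hfil, Finset.insert_val_of_notMem hmem, Finset.singleton_val,
    Multiset.map_cons, Multiset.map_singleton, Multiset.count_cons, Multiset.count_singleton]
  ring

lemma sum_ite_mem_disjoint (D : ι → Finset G)
    (hdisj : ∀ i j, i ≠ j → Disjoint (D i) (D j)) (y : G) :
    ∑ i : ι, (if y ∈ D i then (1 : ℕ) else 0) = if y ∈ famU D then 1 else 0 := by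
  rw [Finset.sum_boole]
  by_cases hy : y ∈ famU D
  · obtain ⟨i₀, -, hi₀⟩ := Finset.mem_biUnion.mp hy
    have : (Finset.univ.filter fun i => y ∈ D i) = {i₀} := by
      ext j
      simp only [mem_filter, mem_univ, true_and, mem_singleton]
      constructor
      · intro hj
        by_contra hne
        exact Finset.disjoint_left.mp (hdisj j i₀ hne) hj hi₀
      · rintro rfl; exact hi₀
    simp [this, hy]
  · have : (Finset.univ.filter fun i => y ∈ D i) = ∅ := by
      ext j
      simp only [mem_filter, mem_univ, true_and, notMem_empty, iff_false]
      intro hj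
      exact hy (Finset.mem_biUnion.mpr ⟨j, mem_univ j, hj⟩)
    simp [this, hy]


variable {F : Type*} [Field F] [Fintype F] [DecidableEq F]

lemma card_sqrts (hF : ringChar F ≠ 2) (a : F) :
    ((Finset.univ.filter fun s : F => s ^ 2 = a).card : ℤ) = quadraticChar F a + 1 := by
  have := quadraticChar_card_sqrts hF a
  rwa [Set.toFinset_setOf] at this

lemma card_sqrts_of_sq (hF : ringChar F ≠ 2) {a : F} (h0 : a ≠ 0) (hsq : IsSquare a) :
    (Finset.univ.filter fun s : F => s ^ 2 = a).card = 2 := by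
  have h := card_sqrts hF a
  rw [(quadraticChar_one_iff_isSquare h0).mpr hsq] at h
  exact_mod_cast h

-- the count of (s,t) with s^2 - t^2 = x is q - 1
lemma card_hyperbola {x : F} (hx : x ≠ 0) (hF : ringChar F ≠ 2) :
    (Finset.univ.filter fun p : F × F => p.1 ^ 2 - p.2 ^ 2 = x).card = Fintype.card F - 1 := by
  have h2 : (2 : F) ≠ 0 := Ring.two_ne_zero hF
  rw [← Finset.card_univ, ← Finset.card_erase_of_mem (Finset.mem_univ (0 : F))]
  apply Finset.card_bij (fun p _ => p.1 + p.2)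
  · rintro ⟨s, t⟩ hp
    simp only [mem_filter, mem_univ, true_and] at hp
    simp only [Finset.mem_erase, Finset.mem_univ, and_true]
    rintro h0
    apply hx
    rw [← hp]
    have : s = -t := by linear_combination h0
    rw [this]; ring
  · rintro ⟨s, t⟩ hs ⟨s', t'⟩ ht h
    simp only [mem_filter, mem_univ, true_and] at hs ht
    have hst : s + t ≠ 0 := by
      rintro h0
      apply hx; rw [← hs]
      have : s = -t := by linear_combination h0
      rw [this]; ring
    have hd : s - t = x * (s + t)⁻¹ := by
      field_simp
      linear_combination hs
    have hd' : s' - t' = x * (s' + t')⁻¹ := by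
      have hst' : s' + t' ≠ 0 := by
        rintro h0
        apply hx; rw [← ht]
        have : s' = -t' := by linear_combination h0
        rw [this]; ring
      field_simp
      linear_combination ht
    simp only at h
    rw [Prod.mk.injEq]
    have hdd : s - t = s' - t' := by rw [hd, hd', h]
    have e1 : (2 : F) * s = 2 * s' := by linear_combination h + hdd
    have e2 : (2 : F) * t = 2 * t' := by linear_combination h - hdd
    exact ⟨mul_left_cancel₀ h2 e1, mul_left_cancel₀ h2 e2⟩
  · intro u hu
    simp only [Finset.mem_erase, Finset.mem_univ, and_true] at hu
    refine ⟨((u + x * u⁻¹) / 2, (u - x * u⁻¹) / 2), ?_, ?_⟩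
    · simp only [mem_filter, mem_univ, true_and]
      field_simp
      ring
    · field_simp
      ring

lemma chi_neg (hF : ringChar F ≠ 2) (hq4 : Fintype.card F % 4 = 1) (x : F) :
    quadraticChar F (-x) = quadraticChar F x := by
  rw [neg_eq_neg_one_mul, map_mul, quadraticChar_neg_one hF, ZMod.χ₄_nat_eq_if_mod_four, hq4]
  have : Fintype.card F % 2 = 1 := Nat.odd_of_mod_four_eq_one hq4
  simp [this]

lemma paley (hF : ringChar F ≠ 2) (hq4 : Fintype.card F % 4 = 1) {x : F} (hx : x ≠ 0) :
    4 * ((((Finset.univ.filter fun a : F => a ≠ 0 ∧ IsSquare a) ×ˢ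
        (Finset.univ.filter fun a : F => a ≠ 0 ∧ IsSquare a)).filter
          fun p => x = p.1 - p.2).card : ℤ)
      = (Fintype.card F : ℤ) - 3 - 2 * quadraticChar F x := by
  set Sq := Finset.univ.filter fun a : F => a ≠ 0 ∧ IsSquare a with hSq
  set B := Finset.univ.filter fun p : F × F => p.1 ^ 2 - p.2 ^ 2 = x with hB
  set T := (Sq ×ˢ Sq).filter fun p => x = p.1 - p.2 with hT
  -- split B
  have hsplit1 := Finset.card_filter_add_card_filter_not
    (s := B) (p := fun p => p.1 = 0)
  have hsplit2 := Finset.card_filter_add_card_filter_not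
    (s := B.filter fun p => ¬ p.1 = 0) (p := fun p => p.2 = 0)
  -- card of B
  have hcardB : B.card = Fintype.card F - 1 := card_hyperbola hx hF
  -- card of the s = 0 part
  have hB1 : ((B.filter fun p => p.1 = 0).card : ℤ) = quadraticChar F x + 1 := by
    rw [← chi_neg hF hq4, ← card_sqrts hF (-x)]
    congr 1
    apply Finset.card_nbij (i := Prod.snd)
    · rintro ⟨s, t⟩ hp
      simp only [hB, Finset.mem_coe, mem_filter, mem_univ, true_and] at hp ⊢
      obtain ⟨h1, h2⟩ := hp
      subst h2
      linear_combination -h1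
    · rintro ⟨s, t⟩ hs ⟨s', t'⟩ ht h
      simp only [hB, Set.mem_setOf_eq, Finset.coe_filter, mem_univ, true_and] at hs ht
      simp only at h
      rw [Prod.mk.injEq]
      exact ⟨hs.2.trans ht.2.symm, h⟩
    · intro t ht
      simp only [Set.mem_setOf_eq, Finset.coe_filter, mem_univ, true_and] at ht
      refine ⟨(0, t), ?_, rfl⟩
      simp only [hB, Finset.mem_coe, mem_filter, mem_univ, true_and]
      exact ⟨by linear_combination -ht, trivial⟩
  -- card of the t = 0 part
  have hB2 : (((B.filter fun p => ¬ p.1 = 0).filter fun p => p.2 = 0).card : ℤ)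
      = quadraticChar F x + 1 := by
    rw [← card_sqrts hF x]
    congr 1
    apply Finset.card_nbij (i := Prod.fst)
    · rintro ⟨s, t⟩ hp
      simp only [hB, Finset.mem_coe, mem_filter, mem_univ, true_and] at hp ⊢
      obtain ⟨⟨h1, h2⟩, h3⟩ := hp
      subst h3
      linear_combination h1
    · rintro ⟨s, t⟩ hs ⟨s', t'⟩ ht h
      simp only [hB, Set.mem_setOf_eq, Finset.coe_filter, mem_univ, true_and] at hs ht
      simp only at h
      rw [Prod.mk.injEq]
      exact ⟨h, hs.2.trans ht.2.symm⟩
    · intro s hs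
      simp only [Set.mem_setOf_eq, Finset.coe_filter, mem_univ, true_and] at hs
      refine ⟨(s, 0), ?_, rfl⟩
      have hs0 : s ≠ 0 := by
        rintro rfl
        apply hx
        rw [← hs]
        ring
      simp only [hB, Finset.mem_coe, mem_filter, mem_univ, true_and]
      exact ⟨⟨by linear_combination hs, hs0⟩, trivial⟩
  -- the main part is fiberwise 4-to-1 over T
  have hB' : ((B.filter fun p => ¬ p.1 = 0).filter fun p => ¬ p.2 = 0).card = 4 * T.card := by
    rw [Finset.card_eq_sum_card_fiberwise (f := fun p => (p.1 ^ 2, p.2 ^ 2)) (t := T)]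
    · rw [Finset.sum_congr rfl (g := fun _ => 4), Finset.sum_const, smul_eq_mul, mul_comm]
      rintro ⟨a, b⟩ hab
      simp only [hT, hSq, mem_filter, mem_product, mem_univ, true_and] at hab
      obtain ⟨⟨⟨ha0, hasq⟩, hb0, hbsq⟩, hxab⟩ := hab
      have : (((B.filter fun p => ¬ p.1 = 0).filter fun p => ¬ p.2 = 0).filter
          fun p => (p.1 ^ 2, p.2 ^ 2) = (a, b))
          = (Finset.univ.filter fun s : F => s ^ 2 = a) ×ˢ
            (Finset.univ.filter fun t : F => t ^ 2 = b) := by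
        ext ⟨s, t⟩
        simp only [hB, mem_filter, mem_product, mem_univ, true_and, Prod.mk.injEq]
        constructor
        · tauto
        · rintro ⟨h1, h2⟩
          have hs0 : ¬ s = 0 := by rintro rfl; exact ha0 (by linear_combination -h1)
          have ht0 : ¬ t = 0 := by rintro rfl; exact hb0 (by linear_combination -h2)
          have heq : s ^ 2 - t ^ 2 = x := by linear_combination h1 - h2 - hxab
          tauto
      rw [this, Finset.card_product, card_sqrts_of_sq hF ha0 hasq, card_sqrts_of_sq hF hb0 hbsq]
    · rintro ⟨s, t⟩ hp
      simp only [hB, Finset.mem_coe, mem_filter, mem_univ, true_and] at hp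
      obtain ⟨⟨h1, hs0⟩, ht0⟩ := hp
      simp only [hT, hSq, Finset.mem_coe, mem_filter, mem_product, mem_univ, true_and]
      have e1 : s ^ 2 ≠ 0 := pow_ne_zero 2 hs0
      have e2 : t ^ 2 ≠ 0 := pow_ne_zero 2 ht0
      have e3 : IsSquare (s ^ 2) := ⟨s, by ring⟩
      have e4 : IsSquare (t ^ 2) := ⟨t, by ring⟩
      have e5 : x = s ^ 2 - t ^ 2 := h1.symm
      tauto
  -- combine
  have hq1 : 1 ≤ Fintype.card F := Fintype.card_pos
  have htot : ((B.filter fun p => p.1 = 0).card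
      + (((B.filter fun p => ¬ p.1 = 0).filter fun p => p.2 = 0).card
        + ((B.filter fun p => ¬ p.1 = 0).filter fun p => ¬ p.2 = 0).card))
      = Fintype.card F - 1 := by
    rw [hsplit2, hsplit1, hcardB]
  have hcast := congrArg (Nat.cast : ℕ → ℤ) htot
  push_cast [Nat.cast_sub hq1] at hcast
  rw [hB1] at hcast
  rw [show (((B.filter fun p => ¬ p.1 = 0).filter fun p => p.2 = 0).card : ℤ)
    = quadraticChar F x + 1 from hB2] at hcast
  rw [show (((B.filter fun p => ¬ p.1 = 0).filter fun p => ¬ p.2 = 0).card : ℤ)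
    = 4 * T.card from by exact_mod_cast congrArg (Nat.cast : ℕ → ℤ) hB'] at hcast
  linarith

end Aux

/-- Theorem: let `q = 2e+1 ≡ 1 (mod 4)` with `e` even and `f = 2`.  Then (i) when
`q ≡ 1 (mod 8)`, `C₀²′` is a `(q,(q-1)/4,2,1,0)`-DPDF and a
`(q,(q-1)/4,2,(q-9)/4,(q-1)/4)`-EPDF; (ii) when `q ≡ 5 (mod 8)`, `C₀²′` is a
`(q,(q-1)/4,2,0,1)`-DPDF and a `(q,(q-1)/4,2,(q-5)/4)`-EDF. -/
theorem partition_of_squares_f_two {F : Type*} [Field F] [Fintype F] [DecidableEq F]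
    (q e : ℕ) (α : F)
    (hq : Fintype.card F = q) (hα : IsPrimitiveElt α)
    (hef : q = e * 2 + 1) (he : 1 < e) (heven : Even e)
    (hq4 : q % 4 = 1) :
    ∀ D : Fin (e / 2) → Finset F, D = (fun i : Fin (e / 2) => cyclo α e 2 (2 * (i : ℕ))) →
    (q % 8 = 1 →
      IsDPDF q ((q - 1) / 4) 2 1 0 D ∧
      ∃ a b : ℤ, 4 * a = (q : ℤ) - 9 ∧ 4 * b = (q : ℤ) - 1 ∧
        IsEPDF q ((q - 1) / 4) 2 a b D) ∧
    (q % 8 = 5 →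
      IsDPDF q ((q - 1) / 4) 2 0 1 D ∧
      ∃ a : ℤ, 4 * a = (q : ℤ) - 5 ∧ IsEDF q ((q - 1) / 4) 2 a D) := by
  intro D hD
  subst hD
  have hee : e % 2 = 0 := Nat.even_iff.mp heven
  have hq5 : 5 ≤ q := by omega
  have hchar : ringChar F ≠ 2 := by
    intro h
    have h2 := FiniteField.even_card_iff_char_two.mp h
    rw [hq] at h2
    omega
  have h2F : (2 : F) ≠ 0 := Ring.two_ne_zero hchar
  -- α is nonzero
  have hα0 : α ≠ 0 := by
    have hex : ∃ x : F, x ≠ 0 ∧ x ≠ 1 := by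
      by_contra hno
      push_neg at hno
      have hsub : (Finset.univ : Finset F) ⊆ {0, 1} := by
        intro x _
        simp only [Finset.mem_insert, Finset.mem_singleton]
        by_cases h0 : x = 0
        · exact Or.inl h0
        · exact Or.inr (hno x h0)
      have hle := Finset.card_le_card hsub
      rw [Finset.card_univ, hq] at hle
      have : ({0, 1} : Finset F).card ≤ 2 :=
        le_trans (Finset.card_insert_le _ _) (by simp)
      omega
    obtain ⟨x, hx0, hx1⟩ := hex
    intro h0
    obtain ⟨k, hk⟩ := hα x hx0
    subst h0
    rcases Nat.eq_zero_or_pos k with rfl | hkpos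
    · rw [pow_zero] at hk; exact hx1 hk
    · rw [zero_pow (by omega)] at hk; exact hx0 hk
  -- order of α
  have hord : orderOf (Units.mk0 α hα0) = 2 * e := by
    have hunit : ∀ u : Fˣ, u ∈ Subgroup.zpowers (Units.mk0 α hα0) := by
      intro u
      obtain ⟨k, hk⟩ := hα (u : F) (Units.ne_zero u)
      refine Subgroup.mem_zpowers_iff.mpr ⟨(k : ℤ), Units.ext ?_⟩
      rw [zpow_natCast, Units.val_pow_eq_pow_val, Units.val_mk0]
      exact hk.symm
    have h1 := orderOf_eq_card_of_forall_mem_zpowers hunit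
    rw [h1]
    simp only [Nat.card_eq_fintype_card, Fintype.card_units, hq]
    omega
  have hpow : ∀ m n : ℕ, α ^ m = α ^ n ↔ m % (2 * e) = n % (2 * e) := by
    intro m n
    constructor
    · intro h
      have hu : Units.mk0 α hα0 ^ m = Units.mk0 α hα0 ^ n := by
        ext
        rw [Units.val_pow_eq_pow_val, Units.val_pow_eq_pow_val, Units.val_mk0]
        exact h
      rw [pow_inj_mod, hord] at hu
      exact hu
    · intro h
      have hu : Units.mk0 α hα0 ^ m = Units.mk0 α hα0 ^ n := by
        rw [pow_inj_mod, hord]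
        exact h
      have := congrArg Units.val hu
      rwa [Units.val_pow_eq_pow_val, Units.val_pow_eq_pow_val, Units.val_mk0] at this
  have hαe : α ^ e = -1 := by
    have h1 : (α ^ e) ^ 2 = 1 := by
      rw [← pow_mul]
      have he20 : α ^ (e * 2) = α ^ 0 := (hpow (e * 2) 0).mpr (by
        rw [Nat.mul_comm 2 e]
        simp [Nat.mod_self])
      rw [he20, pow_zero]
    have h2 : α ^ e ≠ 1 := by
      intro h
      rw [← pow_zero α] at h
      have := (hpow e 0).mp h
      rw [Nat.mod_eq_of_lt (by omega), Nat.zero_mod] at this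
      omega
    have h3 : (α ^ e - 1) * (α ^ e + 1) = 0 := by linear_combination h1
    rcases mul_eq_zero.mp h3 with h | h
    · exact absurd (sub_eq_zero.mp h) h2
    · exact eq_neg_of_add_eq_zero_left h
  have hk0 : ∀ k : ℕ, α ^ k ≠ 0 := fun k => pow_ne_zero k hα0
  have hneg : ∀ k : ℕ, α ^ (k + e) = -α ^ k := by
    intro k
    rw [pow_add, hαe, mul_neg_one]
  have hsq : ∀ k : ℕ, IsSquare (α ^ k) ↔ k % 2 = 0 := by
    intro k
    constructor
    · rintro ⟨y, hy⟩
      have hy0 : y ≠ 0 := by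
        rintro rfl
        rw [mul_zero] at hy
        exact hk0 k hy
      obtain ⟨m, hm⟩ := hα y hy0
      have hkm : α ^ k = α ^ (2 * m) := by
        rw [hy, hm, ← pow_add]
        congr 1
        ring
      rw [hpow] at hkm
      have h2dvd : (2 : ℕ) ∣ 2 * e := ⟨e, rfl⟩
      calc k % 2 = k % (2 * e) % 2 := (Nat.mod_mod_of_dvd k h2dvd).symm
        _ = 2 * m % (2 * e) % 2 := by rw [hkm]
        _ = 2 * m % 2 := Nat.mod_mod_of_dvd _ h2dvd
        _ = 0 := Nat.mul_mod_right 2 m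
    · intro hk
      exact ⟨α ^ (k / 2), by rw [← pow_add]; congr 1; omega⟩
  have hcy : ∀ i : ℕ, cyclo α e 2 i = {α ^ i, -α ^ i} := by
    intro i
    ext x
    simp only [cyclo, Finset.mem_image, Finset.mem_range, Finset.mem_insert,
      Finset.mem_singleton]
    constructor
    · rintro ⟨j, hj, rfl⟩
      interval_cases j
      · left; rw [mul_zero, add_zero]
      · right; rw [mul_one, hneg]
    · rintro (rfl | rfl)
      · exact ⟨0, by omega, by rw [mul_zero, add_zero]⟩
      · exact ⟨1, by omega, by rw [mul_one, hneg]⟩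
  have hane : ∀ k : ℕ, α ^ k ≠ -α ^ k := by
    intro k h
    have h2 : (2 : F) * α ^ k = 0 := by linear_combination h
    rcases mul_eq_zero.mp h2 with h' | h'
    · exact h2F h'
    · exact hk0 k h'
  have hD' : ∀ i : Fin (e / 2), (fun i : Fin (e / 2) => cyclo α e 2 (2 * (i : ℕ))) i
      = {α ^ (2 * (i : ℕ)), -α ^ (2 * (i : ℕ))} := fun i => hcy _
  set D := fun i : Fin (e / 2) => cyclo α e 2 (2 * (i : ℕ)) with hDdef
  -- disjointness
  have hdisj : ∀ i j : Fin (e / 2), i ≠ j → Disjoint (D i) (D j) := by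
    intro i j hij
    rw [Finset.disjoint_left]
    intro x hxi hxj
    rw [hD' i, Finset.mem_insert, Finset.mem_singleton] at hxi
    rw [hD' j, Finset.mem_insert, Finset.mem_singleton] at hxj
    have hi2 : 2 * (i : ℕ) < e := by have := i.2; omega
    have hj2 : 2 * (j : ℕ) < e := by have := j.2; omega
    have hval : (i : ℕ) ≠ (j : ℕ) := fun h => hij (Fin.ext h)
    have key : ∀ a b : ℕ, a < 2 * e → b < 2 * e → α ^ a = α ^ b → a = b := by
      intro a b ha hb hab
      rw [hpow] at hab
      rwa [Nat.mod_eq_of_lt ha, Nat.mod_eq_of_lt hb] at hab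
    rcases hxi with rfl | rfl <;> rcases hxj with h | h
    · have := key (2 * (i : ℕ)) (2 * (j : ℕ)) (by omega) (by omega) h
      omega
    · have := key (2 * (i : ℕ)) (2 * (j : ℕ) + e) (by omega) (by omega)
        (by rw [hneg]; exact h)
      omega
    · have := key (2 * (i : ℕ) + e) (2 * (j : ℕ)) (by omega) (by omega)
        (by rw [hneg]; exact h)
      omega
    · have := key (2 * (i : ℕ)) (2 * (j : ℕ)) (by omega) (by omega) (neg_inj.mp h)
      omega
  have hNE : Nonempty (Fin (e / 2)) := ⟨⟨0, by omega⟩⟩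
  have hmem : ∀ (x : F) (i : Fin (e / 2)),
      x ∈ D i ↔ x = α ^ (2 * (i : ℕ)) ∨ x = -α ^ (2 * (i : ℕ)) := by
    intro x i
    rw [hD' i, Finset.mem_insert, Finset.mem_singleton]
  have hU : famU D = Finset.univ.filter fun x : F => x ≠ 0 ∧ IsSquare x := by
    ext x
    simp only [famU, Finset.mem_biUnion, Finset.mem_univ, true_and, Finset.mem_filter]
    constructor
    · rintro ⟨i, hi⟩
      rw [hmem] at hi
      rcases hi with rfl | rfl
      · exact ⟨hk0 _, (hsq _).mpr (by omega)⟩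
      · refine ⟨neg_ne_zero.mpr (hk0 _), ?_⟩
        rw [← hneg]
        exact (hsq _).mpr (by omega)
    · rintro ⟨hx0, hxsq⟩
      obtain ⟨k, rfl⟩ := hα x hx0
      have hk2 : k % 2 = 0 := (hsq k).mp hxsq
      have hrk : α ^ k = α ^ (k % (2 * e)) := by
        rw [hpow, Nat.mod_mod_of_dvd k dvd_rfl]
      have hre : k % (2 * e) % 2 = 0 := by
        rw [Nat.mod_mod_of_dvd k ⟨e, rfl⟩]
        exact hk2
      have hrlt : k % (2 * e) < 2 * e := Nat.mod_lt _ (by omega)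
      obtain ⟨r, hr⟩ : ∃ r, r = k % (2 * e) := ⟨_, rfl⟩
      rw [← hr] at hrk hre hrlt
      by_cases hcase : r < e
      · refine ⟨⟨r / 2, by omega⟩, ?_⟩
        rw [hmem]
        left
        rw [hrk]
        congr 1
        show r = 2 * (r / 2)
        omega
      · refine ⟨⟨(r - e) / 2, by omega⟩, ?_⟩
        rw [hmem]
        right
        rw [hrk, ← hneg]
        congr 1
        show r = 2 * ((r - e) / 2) + e
        omega
  have h0U : (0 : F) ∉ famU D := by
    rw [hU]
    simp
  -- count of internal differences of the family
  have hIntCount : ∀ x : F,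
      (famInt D).count x = if (2 : F)⁻¹ * x ∈ famU D then 1 else 0 := by
    intro x
    rw [famInt, Multiset.count_sum']
    have step : ∀ i : Fin (e / 2),
        (intDiff (D i)).count x = if (2 : F)⁻¹ * x ∈ D i then 1 else 0 := by
      intro i
      rw [hD' i, count_intDiff_pair (hane _)]
      have hsub1 : α ^ (2 * (i : ℕ)) - -α ^ (2 * (i : ℕ)) = 2 * α ^ (2 * (i : ℕ)) := by ring
      have hsub2 : -α ^ (2 * (i : ℕ)) - α ^ (2 * (i : ℕ)) = 2 * -α ^ (2 * (i : ℕ)) := by ring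
      have hiff : ∀ a : F, (x = 2 * a) ↔ ((2 : F)⁻¹ * x = a) := by
        intro a
        rw [inv_mul_eq_iff_eq_mul₀ h2F]
      rw [hsub1, hsub2, ← hD' i]
      have hmemi := hmem ((2 : F)⁻¹ * x) i
      by_cases h1 : (2 : F)⁻¹ * x = α ^ (2 * (i : ℕ))
      · by_cases h2 : (2 : F)⁻¹ * x = -α ^ (2 * (i : ℕ))
        · exact absurd (h1.symm.trans h2) (hane _)
        · rw [if_pos ((hiff _).mpr h1), if_neg (fun h => h2 ((hiff _).mp h)),
            if_pos (hmemi.mpr (Or.inl h1))]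
      · by_cases h2 : (2 : F)⁻¹ * x = -α ^ (2 * (i : ℕ))
        · rw [if_neg (fun h => h1 ((hiff _).mp h)), if_pos ((hiff _).mpr h2),
            if_pos (hmemi.mpr (Or.inr h2))]
        · rw [if_neg (fun h => h1 ((hiff _).mp h)), if_neg (fun h => h2 ((hiff _).mp h)),
            if_neg (fun h => by rcases hmemi.mp h with h' | h' <;> [exact h1 h'; exact h2 h'])]
    rw [Finset.sum_congr rfl fun i _ => step i, sum_ite_mem_disjoint D hdisj]
  -- counts of internal differences of the union
  have hScount0 : (intDiff (famU D)).count 0 = 0 := by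
    rw [count_intDiff, Finset.card_eq_zero, Finset.filter_eq_empty_iff]
    rintro p -
    rintro ⟨hne, h0⟩
    exact hne (by linear_combination -h0)
  have hq4F : Fintype.card F % 4 = 1 := by rw [hq]; exact hq4
  have hScount : ∀ x : F, x ≠ 0 →
      4 * ((intDiff (famU D)).count x : ℤ)
        = (q : ℤ) - 3 - 2 * quadraticChar F x := by
    intro x hx
    rw [count_intDiff]
    have hfil : ((famU D ×ˢ famU D).filter fun p => p.1 ≠ p.2 ∧ x = p.1 - p.2)
        = ((famU D ×ˢ famU D).filter fun p => x = p.1 - p.2) := by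
      apply Finset.filter_congr
      intro p _
      constructor
      · exact And.right
      · intro h
        exact ⟨fun he' => hx (by rw [h, he', sub_self]), h⟩
    rw [hfil, hU, show (q : ℤ) = (Fintype.card F : ℤ) by rw [hq]]
    exact paley hchar hq4F hx
  have hdecomp := fun x : F => count_decomp D hdisj x
  have hExt0 : (famExt D).count 0 = 0 := by
    have h := hdecomp 0
    rw [hScount0, hIntCount 0, mul_zero, if_neg h0U] at h
    omega
  -- family shape
  have hshape : FamShape q ((q - 1) / 4) 2 D := by
    refine ⟨hq, ?_, ?_, hdisj⟩
    · rw [Fintype.card_fin]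
      omega
    · intro i
      rw [hD' i]
      exact Finset.card_pair (hane _)
  have h0D : ∀ i : Fin (e / 2), (0 : F) ∉ D i := by
    intro i hi
    rcases (hmem 0 i).mp hi with h | h
    · exact hk0 _ h.symm
    · exact hk0 _ (neg_eq_zero.mp h.symm)
  -- quadratic character facts
  have hmemU : ∀ x : F, x ≠ 0 → (x ∈ famU D ↔ quadraticChar F x = 1) := by
    intro x hx
    rw [hU, Finset.mem_filter]
    simp only [Finset.mem_univ, true_and]
    rw [← quadraticChar_one_iff_isSquare hx]
    simp [hx]
  have hchi2inv : quadraticChar F (2⁻¹ : F) = quadraticChar F 2 := by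
    have h21 : quadraticChar F 2 * quadraticChar F (2⁻¹ : F) = 1 := by
      rw [← map_mul, mul_inv_cancel₀ h2F, map_one]
    rcases quadraticChar_dichotomy h2F with h | h
    · rw [h] at h21 ⊢; linarith
    · rw [h] at h21 ⊢; linarith
  have hIZ : ∀ x : F, x ≠ 0 → (((famInt D).count x : ℤ)
      = if quadraticChar F 2 * quadraticChar F x = 1 then 1 else 0) := by
    intro x hx
    have hy0 : (2 : F)⁻¹ * x ≠ 0 := mul_ne_zero (inv_ne_zero h2F) hx
    have hiff : ((2 : F)⁻¹ * x ∈ famU D) ↔ quadraticChar F 2 * quadraticChar F x = 1 := by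
      rw [hmemU _ hy0, map_mul, hchi2inv]
    rw [hIntCount x]
    by_cases hc : (2 : F)⁻¹ * x ∈ famU D
    · rw [if_pos hc, if_pos (hiff.mp hc)]; norm_num
    · rw [if_neg hc, if_neg fun h => hc (hiff.mpr h)]; norm_num
  have hdz : ∀ x : F, ((intDiff (famU D)).count x : ℤ)
      = ((famInt D).count x : ℤ) + ((famExt D).count x : ℤ) := by
    intro x
    exact_mod_cast congrArg (Nat.cast : ℕ → ℤ) (hdecomp x)
  have hInt0 : ((famInt D).count 0 : ℤ) = 0 := by
    rw [hIntCount 0, mul_zero, if_neg h0U]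
    norm_num
  constructor
  · -- q % 8 = 1
    intro h8
    have hsq2 : IsSquare (2 : F) := FiniteField.isSquare_two_iff.mpr (by rw [hq]; omega)
    have hchi2 : quadraticChar F 2 = 1 := (quadraticChar_one_iff_isSquare h2F).mpr hsq2
    have hIsimp : ∀ x : F, x ≠ 0 → (((famInt D).count x : ℤ)
        = if x ∈ famU D then 1 else 0) := by
      intro x hx
      rw [hIZ x hx, hchi2, one_mul]
      by_cases hc : x ∈ famU D
      · rw [if_pos ((hmemU x hx).mp hc), if_pos hc]
      · rw [if_neg (fun h => hc ((hmemU x hx).mpr h)), if_neg hc]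
    constructor
    · refine ⟨hshape, h0D, ?_⟩
      intro x
      by_cases hx : x = 0
      · subst hx
        rw [hInt0, if_neg h0U, if_pos rfl]
      · rw [hIsimp x hx]
        by_cases hc : x ∈ famU D
        · rw [if_pos hc, if_pos hc]
        · rw [if_neg hc, if_neg hc, if_neg hx]
    · obtain ⟨k, hk⟩ : ∃ k, q = 8 * k + 1 := ⟨q / 8, by omega⟩
      refine ⟨2 * (k : ℤ) - 2, 2 * (k : ℤ), by push_cast [hk]; ring, by push_cast [hk]; ring,
        hshape, h0D, ?_⟩
      intro x
      by_cases hx : x = 0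
      · subst hx
        rw [hExt0, if_neg h0U, if_pos rfl]
        norm_num
      · have hdzx := hdz x
        have hP := hScount x hx
        rw [hIsimp x hx] at hdzx
        rcases quadraticChar_dichotomy hx with hx1 | hx1
        · have hxU : x ∈ famU D := (hmemU x hx).mpr hx1
          rw [if_pos hxU]
          rw [if_pos hxU] at hdzx
          rw [hx1] at hP
          push_cast [hk] at hP hdzx ⊢
          linarith
        · have hxU : x ∉ famU D := fun h => by
            have h1 := (hmemU x hx).mp h
            rw [hx1] at h1
            exact absurd h1 (by norm_num)
          rw [if_neg hxU, if_neg hx]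
          rw [if_neg hxU] at hdzx
          rw [hx1] at hP
          push_cast [hk] at hP hdzx ⊢
          linarith
  · -- q % 8 = 5
    intro h8
    have hnsq2 : ¬IsSquare (2 : F) := fun h => by
      have h2 := (FiniteField.isSquare_two_iff.mp h).2
      rw [hq] at h2
      exact h2 h8
    have hchi2 : quadraticChar F 2 = -1 := quadraticChar_neg_one_iff_not_isSquare.mpr hnsq2
    have hIsimp : ∀ x : F, x ≠ 0 → (((famInt D).count x : ℤ)
        = if x ∈ famU D then 0 else 1) := by
      intro x hx
      rw [hIZ x hx, hchi2]
      rcases quadraticChar_dichotomy hx with hx1 | hx1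
      · have hxU : x ∈ famU D := (hmemU x hx).mpr hx1
        rw [hx1, if_pos hxU, if_neg (by norm_num)]
      · have hxU : x ∉ famU D := fun h => by
          have h1 := (hmemU x hx).mp h
          rw [hx1] at h1
          exact absurd h1 (by norm_num)
        rw [hx1, if_neg hxU, if_pos (by norm_num)]
    constructor
    · refine ⟨hshape, h0D, ?_⟩
      intro x
      by_cases hx : x = 0
      · subst hx
        rw [hInt0, if_neg h0U, if_pos rfl]
      · rw [hIsimp x hx]
        by_cases hc : x ∈ famU D
        · rw [if_pos hc, if_pos hc]
        · rw [if_neg hc, if_neg hc, if_neg hx]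
    · obtain ⟨k, hk⟩ : ∃ k, q = 8 * k + 5 := ⟨q / 8, by omega⟩
      refine ⟨2 * (k : ℤ), by push_cast [hk]; ring, hshape, ?_⟩
      intro x
      by_cases hx : x = 0
      · subst hx
        rw [hExt0, if_pos rfl]
        norm_num
      · have hdzx := hdz x
        have hP := hScount x hx
        rw [hIsimp x hx] at hdzx
        rw [if_neg hx]
        rcases quadraticChar_dichotomy hx with hx1 | hx1
        · have hxU : x ∈ famU D := (hmemU x hx).mpr hx1
          rw [if_pos hxU] at hdzx
          rw [hx1] at hP
          push_cast [hk] at hP hdzx ⊢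
          linarith
        · have hxU : x ∉ famU D := fun h => by
            have h1 := (hmemU x hx).mp h
            rw [hx1] at h1
            exact absurd h1 (by norm_num)
          rw [if_neg hxU] at hdzx
          rw [hx1] at hP
          push_cast [hk] at hP hdzx ⊢
          linarith
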